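/- Under the hypotheses of the previous statement, if moreover ρ < 1, then for every x ∈ [0,∞)^N: −Σ_i α_i(x_i) m_i + Σ_i β_i(x_i) ( m_i μ_i + Σ_{j≠i} W_{i→j} m_j ) − Σ_i β_i(x_i) x_i m_i ≤ −(1−ρ) Σ_i κ_i g_i α_i(x_i) ≤ 0; in particular, if α_i(x_i) > 0 for some i, then the left-hand side is strictly negative. -/
import Mathlib


open MeasureTheory

/-- Foster–Lyapunov criterion: under the hypotheses of the Lyapunov bound, if moreover
`ρ < 1` then `G^N V(x) ≤ -(1-ρ) Σ_i κ_i g_i α_i(x_i) ≤ 0`, with strict negativity of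
`G^N V(x)` as soon as `α_i(x_i) > 0` for some `i`. -/
theorem generator_strictly_negative_of_spectral_radius_lt_one
    (N : ℕ) (hN : 1 ≤ N)
    (α β : Fin N → ℝ → ℝ)
    (hα : ∀ i, ∀ y : ℝ, 0 ≤ y → 0 ≤ α i y)
    (hβ : ∀ i, ∀ y : ℝ, 0 ≤ y → 0 ≤ β i y)
    (g : Fin N → ℝ) (hg : ∀ i, 0 < g i)
    (hβα : ∀ i, ∀ y : ℝ, 0 ≤ y → β i y ≤ g i * α i y)
    (W : Fin N → Fin N → ℝ) (hW : ∀ i j, 0 ≤ W i j) (hWdiag : ∀ i, W i i = 0)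
    (F : Fin N → Measure ℝ)
    (hFp : ∀ i, IsProbabilityMeasure (F i))
    (hFsupp : ∀ i, F i (Set.Iio 0) = 0)
    (hFmom : ∀ i, Integrable (fun y : ℝ => y) (F i))
    (μ : Fin N → ℝ) (hμ : ∀ i, μ i = ∫ y, y ∂(F i))
    (H : Fin N → Fin N → ℝ)
    (hH : ∀ i j, H i j = if i = j then g i * μ i else W j i * g i)
    (κ : Fin N → ℝ) (hκ : ∀ i, 0 < κ i)
    (ρ : ℝ) (hρ : 0 ≤ ρ) (hρ1 : ρ < 1)
    (heig : ∀ i, ∑ j, κ j * H j i = ρ * κ i)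
    (m : Fin N → ℝ) (hm : ∀ i, m i = κ i * g i)
    (x : Fin N → ℝ) (hx : ∀ i, 0 ≤ x i) :
    (-∑ i, α i (x i) * m i
        + ∑ i, β i (x i) * (m i * μ i + ∑ j ∈ Finset.univ.erase i, W i j * m j)
        - ∑ i, β i (x i) * x i * m i
      ≤ -(1 - ρ) * ∑ i, κ i * (g i * α i (x i)))
    ∧ (-(1 - ρ) * ∑ i, κ i * (g i * α i (x i)) ≤ 0)
    ∧ ((∃ i, 0 < α i (x i)) →
        -∑ i, α i (x i) * m i
          + ∑ i, β i (x i) * (m i * μ i + ∑ j ∈ Finset.univ.erase i, W i j * m j)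
          - ∑ i, β i (x i) * x i * m i < 0) := by

  have key : ∀ i, m i * μ i + ∑ j ∈ Finset.univ.erase i, W i j * m j = ρ * κ i := by
    intro i
    rw [← heig i, ← Finset.sum_erase_add _ _ (Finset.mem_univ i)]
    have h1 : κ i * H i i = m i * μ i := by rw [hH, hm]; simp; ring
    have h2 : ∑ j ∈ Finset.univ.erase i, κ j * H j i
        = ∑ j ∈ Finset.univ.erase i, W i j * m j := by
      refine Finset.sum_congr rfl ?_
      intro j hj
      have hji : j ≠ i := Finset.ne_of_mem_erase hj
      rw [hH, hm]; simp [hji]; ring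
    rw [h2, h1, add_comm]
  set A := ∑ i, κ i * (g i * α i (x i)) with hA
  have hA0 : 0 ≤ A := Finset.sum_nonneg (fun i _ =>
    mul_nonneg (hκ i).le (mul_nonneg (hg i).le (hα i _ (hx i))))
  have hsum1 : ∑ i, α i (x i) * m i = A := by
    refine Finset.sum_congr rfl fun i _ => ?_
    rw [hm]; ring
  have hsum2 : ∑ i, β i (x i) * (m i * μ i + ∑ j ∈ Finset.univ.erase i, W i j * m j)
      ≤ ρ * A := by
    rw [Finset.mul_sum]
    refine Finset.sum_le_sum fun i _ => ?_
    rw [key i]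
    have h3 : β i (x i) ≤ g i * α i (x i) := hβα i _ (hx i)
    have h4 : 0 ≤ ρ * κ i := mul_nonneg hρ (hκ i).le
    calc β i (x i) * (ρ * κ i) ≤ g i * α i (x i) * (ρ * κ i) :=
          mul_le_mul_of_nonneg_right h3 h4
      _ = ρ * (κ i * (g i * α i (x i))) := by ring
  have hsum3 : 0 ≤ ∑ i, β i (x i) * x i * m i :=
    Finset.sum_nonneg fun i _ => mul_nonneg
      (mul_nonneg (hβ i _ (hx i)) (hx i))
      (by rw [hm]; exact mul_nonneg (hκ i).le (hg i).le)
  have hineq : -∑ i, α i (x i) * m i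
      + ∑ i, β i (x i) * (m i * μ i + ∑ j ∈ Finset.univ.erase i, W i j * m j)
      - ∑ i, β i (x i) * x i * m i ≤ -(1 - ρ) * A := by
    rw [hsum1]; nlinarith
  refine ⟨hineq, by nlinarith, ?_⟩
  rintro ⟨i, hi⟩
  have hApos : 0 < A := by
    refine Finset.sum_pos' (fun j _ =>
      mul_nonneg (hκ j).le (mul_nonneg (hg j).le (hα j _ (hx j))))
      ⟨i, Finset.mem_univ i, ?_⟩
    exact mul_pos (hκ i) (mul_pos (hg i) hi)
  have : -(1 - ρ) * A < 0 := by nlinarith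
  linarith
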